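/- Let A be an associative ℂ-algebra, not necessarily unital. Let e ∈ A be a primitive idempotent such that dim_ℂ eAe < ∞. Then Ae has a maximal proper left A-submodule (a left A-submodule K ⊊ Ae such that the only left A-submodules L with K ⊆ L ⊆ Ae are K and Ae), and any two maximal proper left A-submodules of Ae are equal. -/

import Mathlib

open scoped BigOperators

universe u v

section BasicDefs

variable (R : Type u)

section MulOnly
variable [NonUnitalRing R]

/-- An idempotent element. -/
def IsIdem (e : R) : Prop := e * e = e

/-- Two idempotents are orthogonal. -/
def OrthIdem (e f : R) : Prop := e * f = 0 ∧ f * e = 0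

/-- `f ≤ e` for idempotents: `f * e = f` and `e * f = f`. -/
def SubIdem (f e : R) : Prop := f * e = f ∧ e * f = f

/-- A primitive idempotent. -/
def IsPrimIdem (e : R) : Prop :=
  IsIdem R e ∧ e ≠ 0 ∧ ∀ f : R, IsIdem R f → SubIdem R f e → f = 0 ∨ f = e

/-- Equivalence of idempotents: partial isometries `u ∈ eRf`, `v ∈ fRe` with
`u * v = e`, `v * u = f`. -/
def IdemEquiv (e f : R) : Prop :=
  ∃ u v : R, e * u * f = u ∧ f * v * e = v ∧ u * v = e ∧ v * u = f

/-- A generating idempotent: it has a finite orthogonal primitive decomposition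
    such that every primitive idempotent is equivalent to a member of it. -/
def IsGenIdem (e : R) : Prop :=
  IsIdem R e ∧ ∃ (n : ℕ) (ε : Fin n → R),
    (∀ k, IsPrimIdem R (ε k)) ∧ (∀ k l, k ≠ l → OrthIdem R (ε k) (ε l)) ∧
    e = ∑ k, ε k ∧ ∀ p : R, IsPrimIdem R p → ∃ k, IdemEquiv R p (ε k)

/-- An idempotent of the corner algebra `fRf`. -/
def IsIdemIn (f e : R) : Prop := IsIdem R e ∧ f * e * f = e

/-- A primitive idempotent of the corner algebra `fRf`. -/
def IsPrimIdemIn (f e : R) : Prop :=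
  IsIdemIn R f e ∧ e ≠ 0 ∧ ∀ g : R, IsIdemIn R f g → SubIdem R g e → g = 0 ∨ g = e

/-- Equivalence of idempotents within the corner algebra `fRf`. -/
def IdemEquivIn (f p q : R) : Prop :=
  ∃ u v : R, f * u * f = u ∧ f * v * f = v ∧ p * u * q = u ∧ q * v * p = v ∧
    u * v = p ∧ v * u = q

/-- A generating idempotent of the corner algebra `fRf`. -/
def IsGenIdemIn (f e : R) : Prop :=
  IsIdemIn R f e ∧ ∃ (n : ℕ) (ε : Fin n → R),
    (∀ k, IsPrimIdemIn R f (ε k)) ∧ (∀ k l, k ≠ l → OrthIdem R (ε k) (ε l)) ∧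
    e = ∑ k, ε k ∧ ∀ p : R, IsPrimIdemIn R f p → ∃ k, IdemEquivIn R f p (ε k)

end MulOnly

section Subspaces
variable [NonUnitalRing R] [Module ℂ R] [SMulCommClass ℂ R R] [IsScalarTower ℂ R R]

/-- The subspace `Re = {x | x * e = x}`. -/
def subAe (e : R) : Submodule ℂ R where
  carrier := {x | x * e = x}
  add_mem' := by
    intro a b ha hb
    simp only [Set.mem_setOf_eq] at *
    rw [add_mul, ha, hb]
  zero_mem' := by simp
  smul_mem' := by
    intro c x hx
    simp only [Set.mem_setOf_eq] at *
    rw [smul_mul_assoc, hx]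

/-- The corner subspace `eRf = {x | e * x * f = x}`. -/
def subCorner (e f : R) : Submodule ℂ R where
  carrier := {x | e * x * f = x}
  add_mem' := by
    intro a b ha hb
    simp only [Set.mem_setOf_eq] at *
    rw [mul_add, add_mul, ha, hb]
  zero_mem' := by simp
  smul_mem' := by
    intro c x hx
    simp only [Set.mem_setOf_eq] at *
    rw [mul_smul_comm, smul_mul_assoc, hx]

/-- A symmetric linear functional. -/
def IsSLF (ψ : R →ₗ[ℂ] ℂ) : Prop := ∀ x y : R, ψ (x * y) = ψ (y * x)

/-- Witness data for an AUF algebra: a family of pairwise orthogonal idempotents with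
finite-dimensional corners spanning the algebra. -/
def IsAUFWitness {I : Type v} (E : I → R) : Prop :=
  (∀ i, IsIdem R (E i)) ∧ (∀ i j, i ≠ j → OrthIdem R (E i) (E j)) ∧
  (∀ i j, FiniteDimensional ℂ (subCorner R (E i) (E j))) ∧
  (⨆ i, ⨆ j, subCorner R (E i) (E j)) = ⊤

/-- An almost unital and finite-dimensional (AUF) algebra. -/
def IsAUF : Prop := ∃ (I : Type u) (E : I → R), IsAUFWitness R E

end Subspaces

end BasicDefs

section Stmt4
variable {A : Type u} [NonUnitalRing A] [Module ℂ A] [SMulCommClass ℂ A A] [IsScalarTower ℂ A A]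

/-- `K` is a maximal proper left `A`-submodule of `Ae`. -/
def IsMaxProperSubmodOfAe (e : A) (K : Submodule ℂ A) : Prop :=
  K ≤ subAe A e ∧ (∀ a : A, ∀ x ∈ K, a * x ∈ K) ∧ K ≠ subAe A e ∧
  ∀ L : Submodule ℂ A, L ≤ subAe A e → (∀ a : A, ∀ x ∈ L, a * x ∈ L) →
    K ≤ L → L = K ∨ L = subAe A e

set_option linter.unusedSectionVars false
namespace Stmt4Aux

variable {e : A}

lemma left_unit (hee : e * e = e) {u : A} (hu : e * u * e = u) : e * u = u := by
  conv_lhs => rw [← hu]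
  rw [← mul_assoc, ← mul_assoc, hee, hu]

lemma right_unit (hee : e * e = e) {u : A} (hu : e * u * e = u) : u * e = u := by
  conv_lhs => rw [← hu]
  rw [mul_assoc (e * u) e e, hee, hu]

lemma mul_corner (hee : e * e = e) {u v : A} (hu : e * u * e = u) (hv : e * v * e = v) :
    e * (u * v) * e = u * v := by
  rw [← mul_assoc e u v, left_unit hee hu, mul_assoc u v e, right_unit hee hv]

lemma corner_corner (hee : e * e = e) (v : A) : e * (e * v * e) * e = e * v * e := by
  rw [← mul_assoc, ← mul_assoc, hee, mul_assoc (e * v) e e, hee]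

/-- Right multiplication by `u` as an endomorphism of the corner space. -/
def rmulB (e : A) (hee : e * e = e) (u : subCorner A e e) :
    subCorner A e e →ₗ[ℂ] subCorner A e e where
  toFun x := ⟨x.1 * u.1, mul_corner hee x.2 u.2⟩
  map_add' x y := Subtype.ext (add_mul x.1 y.1 u.1)
  map_smul' c x := Subtype.ext (smul_mul_assoc c x.1 u.1)

/-- Left multiplication by `b` as an endomorphism of the corner space. -/
def lmulB (e : A) (hee : e * e = e) (b : subCorner A e e) :
    subCorner A e e →ₗ[ℂ] subCorner A e e where
  toFun x := ⟨b.1 * x.1, mul_corner hee b.2 x.2⟩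
  map_add' x y := Subtype.ext (mul_add b.1 x.1 y.1)
  map_smul' c x := Subtype.ext (mul_smul_comm c b.1 x.1)

lemma lmul_rmul_pow (hee : e * e = e) (b u : subCorner A e e) (n : ℕ) (x : subCorner A e e) :
    (rmulB e hee u ^ n) (lmulB e hee b x) = lmulB e hee b ((rmulB e hee u ^ n) x) := by
  induction n with
  | zero => simp
  | succ m ih =>
    rw [pow_succ', Module.End.mul_apply, Module.End.mul_apply, ih]
    exact Subtype.ext (mul_assoc b.1 _ u.1)

/-- Powers `e, e*u, e*u*u, ...`. -/
def pwA (e u : A) : ℕ → A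
  | 0 => e
  | n + 1 => pwA e u n * u

lemma pwA_corner (hee : e * e = e) {u : A} (hu : e * u * e = u) (n : ℕ) :
    e * pwA e u n * e = pwA e u n := by
  induction n with
  | zero => show e * e * e = e; rw [hee, hee]
  | succ m ih => exact mul_corner hee ih hu

lemma rmulB_pow_apply (hee : e * e = e) (u : subCorner A e e) (eB : subCorner A e e)
    (heB : eB.1 = e) (n : ℕ) : ((rmulB e hee u ^ n) eB).1 = pwA e u.1 n := by
  induction n with
  | zero => simpa [pwA] using heB
  | succ m ih =>
    rw [pow_succ', Module.End.mul_apply]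
    show ((rmulB e hee u ^ m) eB).1 * u.1 = pwA e u.1 m * u.1
    rw [ih]

lemma dichotomy (he : IsPrimIdem A e) (hfd : FiniteDimensional ℂ (subCorner A e e))
    {u : A} (hu : e * u * e = u) :
    (∃ v : A, v * u = e ∧ u * v = e) ∨ ∃ n : ℕ, pwA e u (n + 1) = 0 := by
  classical
  have hee : e * e = e := he.1
  haveI := hfd
  set uB : subCorner A e e := ⟨u, hu⟩ with huB
  set φ : Module.End ℂ (subCorner A e e) := rmulB e hee uB with hφ
  set d := Module.finrank ℂ (subCorner A e e) with hd
  set n := d + 1 with hn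
  have hker : LinearMap.ker (φ ^ (n + n)) = LinearMap.ker (φ ^ n) := by
    have h1 : LinearMap.ker (φ ^ (n + n)) = LinearMap.ker (φ ^ d) :=
      Module.End.ker_pow_eq_ker_pow_finrank_of_le (by omega)
    have h2 : LinearMap.ker (φ ^ n) = LinearMap.ker (φ ^ d) :=
      Module.End.ker_pow_eq_ker_pow_finrank_of_le (by omega)
    rw [h1, h2]
  set I := LinearMap.range (φ ^ n) with hI
  set Kk := LinearMap.ker (φ ^ n) with hKk
  have hdisj : I ⊓ Kk = ⊥ := by
    refine le_antisymm ?_ bot_le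
    rintro x ⟨hx1, hx2⟩
    obtain ⟨y, rfl⟩ := hx1
    have hy : y ∈ LinearMap.ker (φ ^ (n + n)) := by
      rw [LinearMap.mem_ker, pow_add, Module.End.mul_apply]
      exact hx2
    rw [hker, LinearMap.mem_ker] at hy
    simpa using hy
  have hsup : I ⊔ Kk = ⊤ := by
    apply Submodule.eq_top_of_finrank_eq
    have h1 : Module.finrank ℂ I + Module.finrank ℂ Kk = d :=
      LinearMap.finrank_range_add_finrank_ker (φ ^ n)
    have h2 := Submodule.finrank_sup_add_finrank_inf_eq I Kk
    rw [hdisj, finrank_bot] at h2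
    omega
  set eB : subCorner A e e := ⟨e, by show e * e * e = e; rw [hee, hee]⟩ with heB
  have heB1 : eB.1 = e := rfl
  obtain ⟨fB, hfI, gB, hgK, hfg⟩ :=
    Submodule.mem_sup.mp (hsup ▸ (Submodule.mem_top : eB ∈ (⊤ : Submodule ℂ _)))
  have hI_inv : ∀ (b x : subCorner A e e), x ∈ I → lmulB e hee b x ∈ I := by
    rintro b x ⟨y, rfl⟩
    refine ⟨lmulB e hee b y, ?_⟩
    have h := lmul_rmul_pow hee b uB n y
    rw [← hφ] at h
    exact h
  have hK_inv : ∀ (b x : subCorner A e e), x ∈ Kk → lmulB e hee b x ∈ Kk := by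
    intro b x hx
    rw [LinearMap.mem_ker] at hx ⊢
    have h := lmul_rmul_pow hee b uB n x
    rw [← hφ] at h
    rw [h, hx, map_zero]
  -- decomposition identities
  have hdec : ∀ x : subCorner A e e, x = lmulB e hee x fB + lmulB e hee x gB := by
    intro x
    have : x.1 = x.1 * fB.1 + x.1 * gB.1 := by
      rw [← mul_add]
      have : fB.1 + gB.1 = e := congrArg Subtype.val hfg
      rw [this, right_unit hee x.2]
    exact Subtype.ext this
  have keyI : ∀ x : subCorner A e e, x ∈ I → lmulB e hee x gB = 0 ∧ lmulB e hee x fB = x := by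
    intro x hx
    have h1 : lmulB e hee x fB ∈ I := hI_inv x fB hfI
    have h2 : lmulB e hee x gB ∈ Kk := hK_inv x gB hgK
    have h3 : lmulB e hee x gB ∈ I := by
      have : lmulB e hee x gB = x - lmulB e hee x fB := by
        rw [eq_sub_iff_add_eq, add_comm, ← hdec x]
      rw [this]
      exact Submodule.sub_mem I hx h1
    have h0 : lmulB e hee x gB = 0 := by
      have := hdisj ▸ (Submodule.mem_inf.mpr ⟨h3, h2⟩)
      simpa using this
    refine ⟨h0, ?_⟩
    have := hdec x
    rw [h0, add_zero] at this
    exact this.symm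
  have keyK : ∀ x : subCorner A e e, x ∈ Kk → lmulB e hee x fB = 0 ∧ lmulB e hee x gB = x := by
    intro x hx
    have h1 : lmulB e hee x fB ∈ I := hI_inv x fB hfI
    have h2 : lmulB e hee x gB ∈ Kk := hK_inv x gB hgK
    have h3 : lmulB e hee x fB ∈ Kk := by
      have : lmulB e hee x fB = x - lmulB e hee x gB := by
        rw [eq_sub_iff_add_eq, ← hdec x]
      rw [this]
      exact Submodule.sub_mem Kk hx h2
    have h0 : lmulB e hee x fB = 0 := by
      have := hdisj ▸ (Submodule.mem_inf.mpr ⟨h1, h3⟩)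
      simpa using this
    refine ⟨h0, ?_⟩
    have := hdec x
    rw [h0, zero_add] at this
    exact this.symm
  -- fB is an idempotent below e
  have hffB : fB.1 * fB.1 = fB.1 := congrArg Subtype.val (keyI fB hfI).2
  have hprim := he.2.2 fB.1 hffB ⟨right_unit hee fB.2, left_unit hee fB.2⟩
  rcases hprim with h0 | h1
  · -- fB = 0, so range is trivial, u is nilpotent
    right
    have hIbot : ∀ x : subCorner A e e, x ∈ I → x = 0 := by
      intro x hx
      have := (keyI x hx).2
      have hv : x.1 * fB.1 = x.1 := congrArg Subtype.val this
      rw [h0, mul_zero] at hv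
      exact Subtype.ext hv.symm
    have : (φ ^ n) eB = 0 := hIbot _ ⟨eB, rfl⟩
    refine ⟨d, ?_⟩
    have h6 := congrArg Subtype.val this
    rw [hφ] at h6
    rw [rmulB_pow_apply hee uB eB heB1 n] at h6
    simpa [hn] using h6
  · -- fB = e, kernel is trivial, u is left invertible
    left
    have hgB : gB = 0 := by
      have : gB = eB - fB := by rw [eq_sub_iff_add_eq, add_comm, hfg]
      rw [this]
      exact Subtype.ext (by show eB.1 - fB.1 = 0; rw [heB1, h1, sub_self])
    have hKbot : ∀ x : subCorner A e e, x ∈ Kk → x = 0 := by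
      intro x hx
      have := (keyK x hx).2
      rw [hgB] at this
      have hv : x.1 * (0 : A) = x.1 := congrArg Subtype.val this
      rw [mul_zero] at hv
      exact Subtype.ext hv.symm
    have hinj : Function.Injective φ := by
      intro x y hxy
      have : φ (x - y) = 0 := by rw [map_sub, hxy, sub_self]
      have hmem : x - y ∈ Kk := by
        rw [hKk, LinearMap.mem_ker, hn, pow_succ, Module.End.mul_apply, this, map_zero]
      have := hKbot _ hmem
      rwa [sub_eq_zero] at this
    have hsurj : Function.Surjective φ := (LinearMap.injective_iff_surjective).mp hinj
    obtain ⟨v, hv⟩ := hsurj eB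
    have hvu : v.1 * u = e := congrArg Subtype.val hv
    refine ⟨v.1, hvu, ?_⟩
    have huv : u * v.1 ∈ subCorner A e e := mul_corner hee hu v.2
    have h5 : φ ⟨u * v.1, huv⟩ = φ eB := by
      refine Subtype.ext ?_
      show u * v.1 * u = e * u
      rw [mul_assoc, hvu, right_unit hee hu, left_unit hee hu]
    have := hinj h5
    exact congrArg Subtype.val this

lemma geom_aux (hee : e * e = e) {u : A} (hu : e * u * e = u) (n : ℕ) :
    (∑ k ∈ Finset.range n, pwA e u k) * (e - u) = e - pwA e u n := by
  induction n with
  | zero => simp [pwA]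
  | succ m ih =>
    rw [Finset.sum_range_succ, add_mul, ih, mul_sub, right_unit hee (pwA_corner hee hu m)]
    rw [show pwA e u (m + 1) = pwA e u m * u from rfl]
    abel

lemma geom (hee : e * e = e) {u : A} (hu : e * u * e = u) {n : ℕ} (hn : pwA e u n = 0) :
    ∃ s : A, s * (e - u) = e := by
  refine ⟨∑ k ∈ Finset.range n, pwA e u k, ?_⟩
  rw [geom_aux hee hu n, hn, sub_zero]

lemma nonLeftInv_add (he : IsPrimIdem A e) (hfd : FiniteDimensional ℂ (subCorner A e e))
    {u₁ u₂ : A} (h₁m : e * u₁ * e = u₁) (h₂m : e * u₂ * e = u₂)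
    (h₁ : ¬ ∃ v : A, v * u₁ = e) (h₂ : ¬ ∃ v : A, v * u₂ = e) :
    ¬ ∃ v : A, v * (u₁ + u₂) = e := by
  have hee : e * e = e := he.1
  rintro ⟨v, hv⟩
  have hv'm : e * (e * v * e) * e = e * v * e := corner_corner hee v
  have hsm : e * (u₁ + u₂) * e = u₁ + u₂ := by rw [mul_add, add_mul, h₁m, h₂m]
  have hv's : (e * v * e) * (u₁ + u₂) = e := by
    rw [mul_assoc (e * v) e (u₁ + u₂), left_unit hee hsm, mul_assoc e v (u₁ + u₂), hv, hee]
  have hw₁m : e * ((e * v * e) * u₁) * e = (e * v * e) * u₁ := mul_corner hee hv'm h₁m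
  have hsum : (e * v * e) * u₁ + (e * v * e) * u₂ = e := by rw [← mul_add]; exact hv's
  have hw₁n : ¬ ∃ s : A, s * ((e * v * e) * u₁) = e := by
    rintro ⟨s, hs⟩
    refine h₁ ⟨s * (e * v * e), ?_⟩
    rw [mul_assoc]
    exact hs
  rcases dichotomy he hfd hw₁m with ⟨t, ht, _⟩ | ⟨m, hm⟩
  · exact hw₁n ⟨t, ht⟩
  · obtain ⟨s, hs⟩ := geom hee hw₁m hm
    have hE : e - (e * v * e) * u₁ = (e * v * e) * u₂ := by
      rw [sub_eq_iff_eq_add, add_comm]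
      exact hsum.symm
    rw [hE] at hs
    refine h₂ ⟨s * (e * v * e), ?_⟩
    rw [mul_assoc]
    exact hs

lemma corner_of_ae (hee : e * e = e) {x : A} (hx : x * e = x) (a : A) :
    e * (e * a * x) * e = e * a * x := by
  rw [← mul_assoc e (e * a) x, ← mul_assoc e e a, hee, mul_assoc (e * a) x e, hx]

variable (e)

/-- The candidate unique maximal submodule of `Ae`. -/
def KSub (he : IsPrimIdem A e) (hfd : FiniteDimensional ℂ (subCorner A e e)) :
    Submodule ℂ A where
  carrier := {x | x * e = x ∧ ∀ a : A, ¬ ∃ v : A, v * (e * a * x) = e}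
  add_mem' := by
    rintro x y ⟨hx1, hx2⟩ ⟨hy1, hy2⟩
    refine ⟨by rw [add_mul, hx1, hy1], fun a h => ?_⟩
    have hsplit : e * a * (x + y) = e * a * x + e * a * y := by rw [mul_add]
    rw [hsplit] at h
    exact nonLeftInv_add he hfd (corner_of_ae he.1 hx1 a) (corner_of_ae he.1 hy1 a)
      (hx2 a) (hy2 a) h
  zero_mem' := by
    refine ⟨by rw [zero_mul], fun a => ?_⟩
    rintro ⟨v, hv⟩
    rw [mul_zero, mul_zero] at hv
    exact he.2.1 hv.symm
  smul_mem' := by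
    rintro c x ⟨hx1, hx2⟩
    refine ⟨by rw [smul_mul_assoc, hx1], fun a => ?_⟩
    rintro ⟨v, hv⟩
    have h1 : e * a * (c • x) = c • (e * a * x) := mul_smul_comm c (e * a) x
    rw [h1, mul_smul_comm] at hv
    refine hx2 a ⟨c • v, ?_⟩
    rw [smul_mul_assoc]
    exact hv

lemma mem_KSub (he : IsPrimIdem A e) (hfd : FiniteDimensional ℂ (subCorner A e e)) (x : A) :
    x ∈ KSub e he hfd ↔ x * e = x ∧ ∀ a : A, ¬ ∃ v : A, v * (e * a * x) = e := Iff.rfl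

end Stmt4Aux
/-- Let `e` be a primitive idempotent of a (possibly non-unital) associative
ℂ-algebra `A` with `dim eAe < ∞`. Then `Ae` has a maximal proper left `A`-submodule, and
any two maximal proper left `A`-submodules of `Ae` coincide. -/
theorem stmt_4 (e : A) (he : IsPrimIdem A e)
    (hfd : FiniteDimensional ℂ (subCorner A e e)) :
    (∃ K : Submodule ℂ A, IsMaxProperSubmodOfAe e K) ∧
    (∀ K₁ K₂ : Submodule ℂ A,
      IsMaxProperSubmodOfAe e K₁ → IsMaxProperSubmodOfAe e K₂ → K₁ = K₂) := by
  classical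
  have hee : e * e = e := he.1
  set K : Submodule ℂ A := Stmt4Aux.KSub e he hfd with hKdef
  have hKle : K ≤ subAe A e := fun x hx => hx.1
  have hKmul : ∀ a : A, ∀ x ∈ K, a * x ∈ K := by
    intro a x hx
    obtain ⟨hx1, hx2⟩ := hx
    refine ⟨by rw [mul_assoc, hx1], fun b => ?_⟩
    rintro ⟨v, hv⟩
    rw [show e * b * (a * x) = e * (b * a) * x by simp only [mul_assoc]] at hv
    exact hx2 (b * a) ⟨v, hv⟩
  have heAe : e ∈ subAe A e := hee
  have heK : e ∉ K := fun hK => hK.2 e ⟨e, by rw [hee, hee, hee]⟩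
  have hKne : K ≠ subAe A e := by
    intro h
    rw [h] at heK
    exact heK heAe
  have hfull : ∀ L : Submodule ℂ A, L ≤ subAe A e → (∀ a : A, ∀ x ∈ L, a * x ∈ L) →
      ∀ x ∈ L, x ∉ K → L = subAe A e := by
    intro L hL hLmul x hxL hxK
    have hx1 : x * e = x := hL hxL
    have hx2 : ∃ a v : A, v * (e * a * x) = e := by
      by_contra hcon
      push_neg at hcon
      exact hxK ⟨hx1, fun a h => by obtain ⟨v, hv⟩ := h; exact hcon a v hv⟩
    obtain ⟨a, v, hv⟩ := hx2
    have heL : e ∈ L := by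
      have h3 : (v * (e * a)) * x = e := by rw [mul_assoc]; exact hv
      rw [← h3]
      exact hLmul _ x hxL
    refine le_antisymm hL ?_
    intro y hy
    have hy1 : y * e = y := hy
    rw [← hy1]
    exact hLmul y e heL
  refine ⟨⟨K, hKle, hKmul, hKne, ?_⟩, ?_⟩
  · intro L hL1 hL2 hKL
    by_cases hLK : L ≤ K
    · left
      exact le_antisymm hLK hKL
    · right
      obtain ⟨x, hxL, hxK⟩ := SetLike.not_le_iff_exists.mp hLK
      exact hfull L hL1 hL2 x hxL hxK
  · have huniq : ∀ M : Submodule ℂ A, IsMaxProperSubmodOfAe e M → M = K := by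
      rintro M ⟨hMle, hMmul, hMne, hMmax⟩
      by_cases hMK : M ≤ K
      · rcases hMmax K hKle hKmul hMK with h | h
        · exact h.symm
        · exact absurd h hKne
      · obtain ⟨x, hxM, hxK⟩ := SetLike.not_le_iff_exists.mp hMK
        exact absurd (hfull M hMle hMmul x hxM hxK) hMne
    intro K₁ K₂ h1 h2
    rw [huniq K₁ h1, huniq K₂ h2]

end Stmt4
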